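/- Let n ≥ 2, let τ₁, …, τ_{n−1} be 2×2 real orthogonal matrices, and let Q' be the augmented reflection-based Laplacian on ℝ^{2n} with designated index ℓ and unit normal n̂. Let v : ℝ → ℝ², ω : ℝ → ℝ, α : ℝ → ℝ be continuous, and let r : ℝ → ℝ², θ : ℝ → ℝ, s : ℝ → ℝ be differentiable with ṙ(t) = v(t), θ̇(t) = ω(t), ṡ(t) = α(t)s(t), and s(t) > 0 for all t. Write R(t) = R(θ(t)), Ω(t) = ω(t)·[[0,−1],[1,0]], and for a configuration p(t) ∈ ℝ^{2n} set c(t) = p(t) − 𝟙ₙ⊗r(t). Suppose p : ℝ → ℝ^{2n} is differentiable and satisfies the maneuvering control law ṗ(t) = −(Iₙ⊗R(t))Q'(Iₙ⊗R(t))ᵀ c(t) + 𝟙ₙ⊗v(t) + (Iₙ⊗Ω(t) + α(t)I_{2n}) c(t). Then the transformed state ζ(t) = s(t)⁻¹ (Iₙ⊗R(t)ᵀ) c(t) satisfies ζ̇(t) = −Q'ζ(t) for all t. -/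

import Mathlib

open Filter Topology Matrix

noncomputable section

abbrev Cfg (n : ℕ) := EuclideanSpace ℝ (Fin n × Fin 2)

/-- Multiplication of a 2×2 matrix with a planar vector. -/
def mv (M : Matrix (Fin 2) (Fin 2) ℝ) (v : EuclideanSpace ℝ (Fin 2)) :
    EuclideanSpace ℝ (Fin 2) := WithLp.toLp 2 (M.mulVec v)

/-- Multiplication of a 2n×2n matrix with a configuration vector. -/
def mvC {n : ℕ} (M : Matrix (Fin n × Fin 2) (Fin n × Fin 2) ℝ) (v : Cfg n) : Cfg n :=
  WithLp.toLp 2 (M.mulVec v)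

/-- The i-th planar component of a configuration. -/
def blk {n : ℕ} (p : Cfg n) (i : Fin n) : EuclideanSpace ℝ (Fin 2) :=
  WithLp.toLp 2 (fun a : Fin 2 => p (i, a))

/-- The action of the matrix-weighted Laplacian Q of the path graph on vertices 0, …, n-1
(with matrix weight τ e on the edge {e, e+1}):
(Qp)ᵢ = (pᵢ − τ_{i-1} p_{i-1}) + (pᵢ − τᵢᵀ p_{i+1}), where the first summand is omitted
for the first vertex and the second for the last. -/
def lapAct (n : ℕ) (τ : Fin (n - 1) → Matrix (Fin 2) (Fin 2) ℝ)
    (p : Fin n → EuclideanSpace ℝ (Fin 2)) (i : Fin n) : EuclideanSpace ℝ (Fin 2) :=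
  (if h : 0 < (i : ℕ) then
      p i - mv (τ ⟨(i : ℕ) - 1, by have := i.isLt; omega⟩)
        (p ⟨(i : ℕ) - 1, by have := i.isLt; omega⟩)
    else 0)
  + (if h : (i : ℕ) + 1 < n then
      p i - mv (τ ⟨(i : ℕ), by omega⟩)ᵀ (p ⟨(i : ℕ) + 1, h⟩)
    else 0)

/-- The action of the augmented reflection-based Laplacian Q', with designated index ℓ and
unit normal n̂: (Q'p)ᵢ = (Qp)ᵢ + [i = ℓ]·2(n̂·p_ℓ)n̂. -/
def lapAugAct (n : ℕ) (τ : Fin (n - 1) → Matrix (Fin 2) (Fin 2) ℝ) (ℓ : Fin n)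
    (nh : EuclideanSpace ℝ (Fin 2)) (p : Fin n → EuclideanSpace ℝ (Fin 2)) (i : Fin n) :
    EuclideanSpace ℝ (Fin 2) :=
  lapAct n τ p i + if i = ℓ then (2 * (inner ℝ nh (p ℓ) : ℝ)) • nh else 0

/-- V₀ = (S₁ L̂, …, Sₙ L̂). -/
def V0 {n : ℕ} (S : Fin n → Matrix (Fin 2) (Fin 2) ℝ) (L : EuclideanSpace ℝ (Fin 2)) : Cfg n :=
  WithLp.toLp 2 (fun x : Fin n × Fin 2 => mv (S x.1) L x.2)

/-- Left endpoint of edge e of the path graph, as a vertex. -/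
def eL {n : ℕ} (e : Fin (n - 1)) : Fin n := ⟨e, by have := e.isLt; omega⟩
/-- Right endpoint of edge e of the path graph, as a vertex. -/
def eR {n : ℕ} (e : Fin (n - 1)) : Fin n := ⟨(e : ℕ) + 1, by have := e.isLt; omega⟩

/-- The 2×2 rotation matrix R(θ) = [[cos θ, −sin θ],[sin θ, cos θ]]. -/
def Rot (θ : ℝ) : Matrix (Fin 2) (Fin 2) ℝ :=
  !![Real.cos θ, -Real.sin θ; Real.sin θ, Real.cos θ]

/-- Ω = ω·[[0,−1],[1,0]]. -/
def Omat (w : ℝ) : Matrix (Fin 2) (Fin 2) ℝ := w • !![0, -1; 1, 0]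

/-- The block-diagonal operator Iₙ ⊗ M applying a 2×2 matrix M to each planar component. -/
def kron {n : ℕ} (M : Matrix (Fin 2) (Fin 2) ℝ) (q : Cfg n) : Cfg n :=
  WithLp.toLp 2 (fun x : Fin n × Fin 2 => mv M (blk q x.1) x.2)

/-- The configuration 𝟙ₙ ⊗ r whose every planar component equals r. -/
def ones {n : ℕ} (r : EuclideanSpace ℝ (Fin 2)) : Cfg n := WithLp.toLp 2 (fun x : Fin n × Fin 2 => r x.2)

/-- The transformed state ζ(t) = s(t)⁻¹ (Iₙ⊗R(θ(t))ᵀ)(p(t) − 𝟙ₙ⊗r(t)). -/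
def zetaFn {n : ℕ} (θs sc : ℝ → ℝ) (r : ℝ → EuclideanSpace ℝ (Fin 2)) (p : ℝ → Cfg n)
    (t : ℝ) : Cfg n :=
  (sc t)⁻¹ • kron (Rot (θs t))ᵀ (p t - ones (r t))

def kronL {n : ℕ} (M : Matrix (Fin 2) (Fin 2) ℝ) : Cfg n →ₗ[ℝ] Cfg n where
  toFun := kron M
  map_add' q q' := by
    ext x
    obtain ⟨i, b⟩ := x
    fin_cases b <;>
    simp [kron, mv, blk, Matrix.mulVec, dotProduct, PiLp.add_apply, mul_add,
      Finset.sum_add_distrib] <;> ring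
  map_smul' a q := by
    ext x
    obtain ⟨i, b⟩ := x
    fin_cases b <;>
    simp [kron, mv, blk, Matrix.mulVec, dotProduct, PiLp.smul_apply, Finset.mul_sum,
      mul_left_comm, smul_eq_mul] <;>
    ring

lemma kron_smul {n : ℕ} (M : Matrix (Fin 2) (Fin 2) ℝ) (a : ℝ) (x : Cfg n) :
    kron M (a • x) = a • kron M x := (kronL M).map_smul a x

def JL (n : ℕ) : Cfg n →L[ℝ] Cfg n :=
  LinearMap.toContinuousLinearMap (kronL !![0, -1; 1, 0])

lemma JL_apply {n : ℕ} (q : Cfg n) : JL n q = kron !![0, -1; 1, 0] q := rfl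

def onesL (n : ℕ) : EuclideanSpace ℝ (Fin 2) →L[ℝ] Cfg n :=
  LinearMap.toContinuousLinearMap
    { toFun := ones
      map_add' := by intros; ext x; simp [ones, PiLp.add_apply]
      map_smul' := by intros; ext x; simp [ones, PiLp.smul_apply] }

lemma onesL_apply {n : ℕ} (r : EuclideanSpace ℝ (Fin 2)) : onesL n r = ones r := rfl

lemma JJ {n : ℕ} (q : Cfg n) :
    kron !![0, -1; 1, 0] (kron (!![0, -1; 1, 0]) q) = -q := by
  ext x
  obtain ⟨i, a⟩ := x
  fin_cases a <;>
    simp [kron, mv, blk, Matrix.mulVec, dotProduct, Fin.sum_univ_two, PiLp.neg_apply]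

lemma kron_rot {n : ℕ} (θ : ℝ) (q : Cfg n) :
    kron (Rot θ) q = Real.cos θ • q + Real.sin θ • kron !![0, -1; 1, 0] q := by
  ext x
  obtain ⟨i, a⟩ := x
  fin_cases a <;>
    simp [kron, mv, blk, Rot, Matrix.mulVec, dotProduct, Fin.sum_univ_two,
      PiLp.add_apply, PiLp.smul_apply, smul_eq_mul] <;> ring

lemma kron_rotT {n : ℕ} (θ : ℝ) (q : Cfg n) :
    kron (Rot θ)ᵀ q = Real.cos θ • q - Real.sin θ • kron !![0, -1; 1, 0] q := by
  ext x
  obtain ⟨i, a⟩ := x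
  fin_cases a <;>
    simp [kron, mv, blk, Rot, Matrix.mulVec, dotProduct, Fin.sum_univ_two,
      PiLp.sub_apply, PiLp.smul_apply, smul_eq_mul, Matrix.transpose_apply] <;> ring

lemma kron_omat {n : ℕ} (w : ℝ) (q : Cfg n) :
    kron (Omat w) q = w • kron !![0, -1; 1, 0] q := by
  ext x
  obtain ⟨i, a⟩ := x
  fin_cases a <;>
    simp [kron, mv, blk, Omat, Matrix.mulVec, dotProduct, Fin.sum_univ_two,
      PiLp.smul_apply, smul_eq_mul] <;> ring

lemma mvC_smul {n : ℕ} (Qm : Matrix (Fin n × Fin 2) (Fin n × Fin 2) ℝ) (a : ℝ) (x : Cfg n) :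
    mvC Qm (a • x) = a • mvC Qm x := by
  ext y
  simp [mvC, Matrix.mulVec, dotProduct, PiLp.smul_apply, Finset.mul_sum, smul_eq_mul,
    mul_left_comm]

/-- Under the maneuvering control law
ṗ = −(Iₙ⊗R)Q'(Iₙ⊗R)ᵀc + 𝟙ₙ⊗v + (Iₙ⊗Ω + αI)c with c = p − 𝟙ₙ⊗r, where ṙ = v, θ̇ = ω,
ṡ = αs, s > 0, the transformed state ζ(t) = s(t)⁻¹(Iₙ⊗R(t)ᵀ)c(t) satisfies ζ̇ = −Q'ζ. -/
theorem stmt10 (n : ℕ) (hn : 2 ≤ n)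
    (τ : Fin (n - 1) → Matrix (Fin 2) (Fin 2) ℝ)
    (hτ : ∀ e, (τ e)ᵀ * τ e = 1)
    (ℓ : Fin n) (nh : EuclideanSpace ℝ (Fin 2)) (hnh : ‖nh‖ = 1)
    (Qm : Matrix (Fin n × Fin 2) (Fin n × Fin 2) ℝ)
    (hQm : ∀ (p : Cfg n) (i : Fin n) (a : Fin 2),
      mvC Qm p (i, a) = lapAugAct n τ ℓ nh (blk p) i a)
    (v : ℝ → EuclideanSpace ℝ (Fin 2)) (ω α : ℝ → ℝ)
    (hv : Continuous v) (hω : Continuous ω) (hα : Continuous α)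
    (r : ℝ → EuclideanSpace ℝ (Fin 2)) (θs sc : ℝ → ℝ)
    (hr : ∀ t, HasDerivAt r (v t) t)
    (hθ : ∀ t, HasDerivAt θs (ω t) t)
    (hs : ∀ t, HasDerivAt sc (α t * sc t) t)
    (hspos : ∀ t, 0 < sc t)
    (p : ℝ → Cfg n)
    (hp : ∀ t, HasDerivAt p
      (-(kron (Rot (θs t)) (mvC Qm (kron (Rot (θs t))ᵀ (p t - ones (r t)))))
        + ones (v t)
        + (kron (Omat (ω t)) (p t - ones (r t)) + α t • (p t - ones (r t)))) t) :
    ∀ t, HasDerivAt (zetaFn θs sc r p) (-(mvC Qm (zetaFn θs sc r p t))) t := by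
  intro t
  have hones : HasDerivAt (fun u => (ones (r u) : Cfg n)) (ones (v t)) t := by
    have := (onesL n).hasFDerivAt.comp_hasDerivAt t (hr t)
    exact this
  have hc : HasDerivAt (fun u => p u - ones (r u))
      (-(kron (Rot (θs t)) (mvC Qm (kron (Rot (θs t))ᵀ (p t - ones (r t)))))
        + (kron (Omat (ω t)) (p t - ones (r t)) + α t • (p t - ones (r t)))) t := by
    have := (hp t).sub hones
    exact this.congr_deriv (by abel)
  have hJc : HasDerivAt (fun u => JL n (p u - ones (r u)))
      (JL n (-(kron (Rot (θs t)) (mvC Qm (kron (Rot (θs t))ᵀ (p t - ones (r t)))))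
        + (kron (Omat (ω t)) (p t - ones (r t)) + α t • (p t - ones (r t))))) t :=
    (JL n).hasFDerivAt.comp_hasDerivAt t hc
  have hcos : HasDerivAt (fun u => Real.cos (θs u)) (-Real.sin (θs t) * ω t) t := (hθ t).cos
  have hsin : HasDerivAt (fun u => Real.sin (θs u)) (Real.cos (θs t) * ω t) t := (hθ t).sin
  have hinv : HasDerivAt (fun u => (sc u)⁻¹) (-(α t * sc t) / sc t ^ 2) t :=
    (hs t).inv (hspos t).ne'
  have h1 := hcos.smul hc
  have h2 := hsin.smul hJc
  have hsum := h1.sub h2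
  have hfinal := hinv.smul hsum
  have hfun : zetaFn θs sc r p
      = fun u => (sc u)⁻¹ • (Real.cos (θs u) • (p u - ones (r u))
        - Real.sin (θs u) • JL n (p u - ones (r u))) := by
    funext u
    rw [zetaFn, kron_rotT, JL_apply]
  rw [hfun]
  refine hfinal.congr_deriv ?_
  have hpy : Real.sin (θs t) ^ 2 + Real.cos (θs t) ^ 2 = 1 := Real.sin_sq_add_cos_sq _
  have hsne : sc t ≠ 0 := (hspos t).ne'
  simp only [kron_rotT, kron_rot, kron_omat, JL_apply, mvC_smul, map_add, map_neg,
    LinearMap.map_smul, kron_smul, JJ, smul_neg, Pi.smul_apply', Pi.sub_apply]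
  match_scalars <;> field_simp <;> (first | ring1 | linear_combination hpy | linear_combination (-1) * hpy)
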